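/- Let t ≥ 2, let G be a 3-uniform hypergraph on n vertices, and suppose every pair of distinct vertices of G has co-degree at least b·n, where b = √2/√t + ε for some ε > 0 and n is sufficiently large (depending on ε and t). Then G contains vertices u_0, v_0, u_1, v_1, ..., u_{s-1}, v_{s-1} (for some 2 ≤ s ≤ t), with the pairs {u_i, v_i} pairwise distinct, such that {u_i, v_i, u_{i+1}} and {u_i, v_i, v_{i+1}} are edges of G for all i mod s. -/

import Mathlib

noncomputable section
open Finset

namespace CRseq

/-- previous value, with `prev g 0 = 0`. -/
def prev (g : ℕ → ℝ) (k : ℕ) : ℝ := if k = 0 then 0 else g (k-1)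

/-- the master convolution form. -/
def Mf (g : ℕ → ℝ) (j : ℕ) : ℝ :=
  ∑ ℓ ∈ Finset.range (j+1), g ℓ * (g (j-ℓ) - prev g (j-ℓ))

def Af (g : ℕ → ℝ) (j : ℕ) : ℝ := ∑ k ∈ Finset.range (j+1), g k * g (j-k)

lemma sum_prev_eq (b c : ℕ → ℝ) (j : ℕ) :
    ∑ ℓ ∈ Finset.range (j+1), prev b ℓ * c (j-ℓ)
      = ∑ ℓ ∈ Finset.range (j+1), b ℓ * prev c (j-ℓ) := by
  rw [Finset.sum_range_succ' (fun ℓ => prev b ℓ * c (j-ℓ)),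
      Finset.sum_range_succ (fun ℓ => b ℓ * prev c (j-ℓ))]
  have h0 : prev b 0 * c (j - 0) = 0 := by simp [prev]
  have hj : b j * prev c (j - j) = 0 := by simp [prev]
  rw [h0, hj, add_zero, add_zero]
  apply Finset.sum_congr rfl
  intro i hi
  rw [Finset.mem_range] at hi
  have h1 : prev b (i+1) = b i := by simp [prev]
  have h2 : prev c (j - i) = c (j - i - 1) := by
    have : j - i ≠ 0 := by omega
    simp [prev, this]
  rw [h1, h2]
  congr 2 <;> omega

lemma abel (b c : ℕ → ℝ) (j : ℕ) :
    ∑ ℓ ∈ Finset.range (j+1), (b ℓ - prev b ℓ) * c (j-ℓ)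
      = ∑ ℓ ∈ Finset.range (j+1), b ℓ * (c (j-ℓ) - prev c (j-ℓ)) := by
  have h1 : ∀ ℓ, (b ℓ - prev b ℓ) * c (j-ℓ) = b ℓ * c (j-ℓ) - prev b ℓ * c (j-ℓ) := by
    intro ℓ; ring
  have h2 : ∀ ℓ, b ℓ * (c (j-ℓ) - prev c (j-ℓ)) = b ℓ * c (j-ℓ) - b ℓ * prev c (j-ℓ) := by
    intro ℓ; ring
  simp only [h1, h2, Finset.sum_sub_distrib]
  rw [sum_prev_eq]

lemma cross_symm (g p : ℕ → ℝ) (j : ℕ) :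
    ∑ k ∈ Finset.range (j+1), g k * p (j-k) = ∑ k ∈ Finset.range (j+1), p k * g (j-k) := by
  rw [← Finset.sum_range_reflect (fun k => p k * g (j-k)) (j+1)]
  apply Finset.sum_congr rfl
  intro i hi
  rw [Finset.mem_range] at hi
  have h1 : j + 1 - 1 - i = j - i := by omega
  have h2 : j - (j - i) = i := by omega
  rw [h1, h2, mul_comm]

lemma Af_sub (g p : ℕ → ℝ) (j : ℕ) :
    Af g j - Af p j = ∑ k ∈ Finset.range (j+1), (g k - p k) * (g (j-k) + p (j-k)) := by
  have expand : ∀ k, (g k - p k) * (g (j-k) + p (j-k))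
      = (g k * g (j-k) - p k * p (j-k)) + (g k * p (j-k) - p k * g (j-k)) := by
    intro k; ring
  simp only [expand]
  rw [Finset.sum_add_distrib, Finset.sum_sub_distrib, Finset.sum_sub_distrib]
  have := cross_symm g p j
  rw [this]
  simp [Af]

lemma Mf_eq (g : ℕ → ℝ) (j : ℕ) (hj : 1 ≤ j) : Mf g j = Af g j - Af g (j-1) := by
  unfold Mf
  have h2 : ∀ ℓ, g ℓ * (g (j-ℓ) - prev g (j-ℓ)) = g ℓ * g (j-ℓ) - g ℓ * prev g (j-ℓ) := by
    intro ℓ; ring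
  simp only [h2, Finset.sum_sub_distrib]
  have : ∑ ℓ ∈ Finset.range (j+1), g ℓ * prev g (j-ℓ) = Af g (j-1) := by
    rw [Finset.sum_range_succ]
    have hj0 : g j * prev g (j-j) = 0 := by simp [prev]
    rw [hj0, add_zero]
    unfold Af
    have hr : j = (j-1) + 1 := by omega
    rw [hr]
    apply Finset.sum_congr rfl
    intro i hi
    rw [Finset.mem_range] at hi
    have : (j-1) + 1 - i ≠ 0 := by omega
    simp only [prev, this, if_false]
    congr 2 <;> omega
  rw [this]
  rfl

/-- monotone domination for the master form -/
lemma Mf_mono (g p : ℕ → ℝ) (j : ℕ) (hj : 1 ≤ j)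
    (hle : ∀ k, k ≤ j → p k ≤ g k) (hp : ∀ k, k ≤ j → 0 ≤ p k)
    (hgm : ∀ k, k + 1 ≤ j → g k ≤ g (k+1)) (hpm : ∀ k, k + 1 ≤ j → p k ≤ p (k+1)) :
    Mf p j ≤ Mf g j := by
  rw [Mf_eq g j hj, Mf_eq p j hj]
  have key : (Af g j - Af p j) - (Af g (j-1) - Af p (j-1)) ≥ 0 := by
    rw [Af_sub g p j, Af_sub g p (j-1)]
    have hsplit : ∑ k ∈ Finset.range (j+1), (g k - p k) * (g (j-k) + p (j-k))
        = (∑ k ∈ Finset.range j, (g k - p k) * (g (j-k) + p (j-k)))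
          + (g j - p j) * (g 0 + p 0) := by
      rw [Finset.sum_range_succ]
      simp
    rw [hsplit]
    have hr : j - 1 + 1 = j := by omega
    have hsum2 : ∑ k ∈ Finset.range (j-1+1), (g k - p k) * (g (j-1-k) + p (j-1-k))
        = ∑ k ∈ Finset.range j, (g k - p k) * (g (j-1-k) + p (j-1-k)) := by rw [hr]
    rw [hsum2]
    have hterm : ∀ k ∈ Finset.range j,
        (g k - p k) * (g (j-1-k) + p (j-1-k)) ≤ (g k - p k) * (g (j-k) + p (j-k)) := by
      intro k hk
      rw [Finset.mem_range] at hk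
      have hkp : p k ≤ g k := hle k (by omega)
      have e1 : j - k = (j-1-k) + 1 := by omega
      have hg' : g (j-1-k) ≤ g (j-k) := by rw [e1]; exact hgm (j-1-k) (by omega)
      have hp' : p (j-1-k) ≤ p (j-k) := by rw [e1]; exact hpm (j-1-k) (by omega)
      apply mul_le_mul_of_nonneg_left _ (by linarith)
      linarith
    have h1 : ∑ k ∈ Finset.range j, (g k - p k) * (g (j-1-k) + p (j-1-k))
        ≤ ∑ k ∈ Finset.range j, (g k - p k) * (g (j-k) + p (j-k)) :=
      Finset.sum_le_sum hterm
    have hlast : 0 ≤ (g j - p j) * (g 0 + p 0) := by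
      have := hle j le_rfl
      have := hp 0 (by omega)
      have hg0 : 0 ≤ g 0 := le_trans (hp 0 (by omega)) (hle 0 (by omega))
      apply mul_nonneg <;> linarith
    linarith
  linarith

end CRseq

namespace CRseq2
open CRseq

lemma sum_id_real (m : ℕ) : (∑ i ∈ Finset.range m, ((i:ℝ))) = ((m:ℝ)^2 - m)/2 := by
  induction m with
  | zero => simp
  | succ k ih => rw [Finset.sum_range_succ, ih]; push_cast; ring

/-- the lower-bound profile: 0, then affine with slope D/2, flat at the top index. -/
def pro (D S : ℝ) (j : ℕ) (k : ℕ) : ℝ :=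
  if k = 0 then 0 else ((min k (j-1) : ℕ) + 1 : ℝ)*D/2 - S

lemma pro_eval (D S : ℝ) (j k : ℕ) (hk : 1 ≤ k) (hkj : k ≤ j - 1) :
    pro D S j k = ((k:ℝ)+1)*D/2 - S := by
  have : min k (j-1) = k := min_eq_left hkj
  simp only [pro, this]
  have : k ≠ 0 := by omega
  simp [this]

lemma pro_top (D S : ℝ) (j : ℕ) (hj : 2 ≤ j) :
    pro D S j j = ((j:ℝ))*D/2 - S := by
  have h1 : min j (j-1) = j - 1 := min_eq_right (by omega)
  have h2 : j ≠ 0 := by omega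
  simp only [pro, h1, if_neg h2]
  have : ((j - 1 : ℕ):ℝ) = (j:ℝ) - 1 := by
    have : (1:ℕ) ≤ j := by omega
    push_cast [this]; ring
  rw [this]; ring

lemma pro_mono (D S : ℝ) (j : ℕ) (hj : 2 ≤ j) (hS0 : 0 ≤ S) (hSD : S ≤ D/2) (k : ℕ) :
    pro D S j k ≤ pro D S j (k+1) := by
  by_cases hk : k = 0
  · subst hk
    simp only [pro]
    have h1 : (1:ℕ) ≠ 0 := by omega
    simp only [if_pos rfl, if_neg h1]
    have hmin : min 1 (j-1) = 1 := min_eq_left (by omega)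
    rw [hmin]
    norm_num
    linarith
  · simp only [pro, if_neg hk]
    have h1 : k + 1 ≠ 0 := by omega
    simp only [if_neg h1]
    have : (min k (j-1) : ℕ) ≤ min (k+1) (j-1) := by omega
    have hc : ((min k (j-1) : ℕ) : ℝ) ≤ ((min (k+1) (j-1) : ℕ) : ℝ) := by exact_mod_cast this
    have hD : 0 ≤ D := by linarith
    nlinarith

lemma Mf_pro (D S : ℝ) (j : ℕ) (hj : 3 ≤ j) :
    Mf (pro D S j) j
      = (D/2)*((D/2)*((((j:ℝ)-2)^2+3*((j:ℝ)-2))/2) - ((j:ℝ)-2)*S)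
        + (((j:ℝ))*D/2 - S)*(D - S) := by
  obtain ⟨m, rfl⟩ : ∃ m, j = m + 2 := ⟨j - 2, by omega⟩
  unfold Mf
  rw [Finset.sum_range_succ, Finset.sum_range_succ, Finset.sum_range_succ']
  have hf0 : pro D S (m+2) 0 * (pro D S (m+2) (m+2-0) - prev (pro D S (m+2)) (m+2-0)) = 0 := by
    simp [pro]
  have hftop : pro D S (m+2) (m+2) * (pro D S (m+2) (m+2-(m+2)) - prev (pro D S (m+2)) (m+2-(m+2))) = 0 := by
    have : m + 2 - (m+2) = 0 := by omega
    rw [this]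
    simp [pro, prev]
  have hfm1 : pro D S (m+2) (m+1) * (pro D S (m+2) (m+2-(m+1)) - prev (pro D S (m+2)) (m+2-(m+1))) 
      = (((m:ℝ)+2)*D/2 - S)*(D - S) := by
    have h1 : m + 2 - (m+1) = 1 := by omega
    rw [h1]
    have h2 : pro D S (m+2) (m+1) = ((m:ℝ)+2)*D/2 - S := by
      have := pro_eval D S (m+2) (m+1) (by omega) (by omega)
      rw [this]; push_cast; ring
    have h3 : pro D S (m+2) 1 = D - S := by
      have := pro_eval D S (m+2) 1 (by omega) (by omega)
      rw [this]; norm_num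
    have h4 : prev (pro D S (m+2)) 1 = 0 := by simp [prev, pro]
    rw [h2, h3, h4]; ring
  have hmid : ∀ i ∈ Finset.range m,
      pro D S (m+2) (i+1) * (pro D S (m+2) (m+2-(i+1)) - prev (pro D S (m+2)) (m+2-(i+1)))
      = (((i:ℝ)+2)*D/2 - S) * (D/2) := by
    intro i hi
    rw [Finset.mem_range] at hi
    have h1 : m + 2 - (i+1) = m + 1 - i := by omega
    rw [h1]
    have h2 : pro D S (m+2) (i+1) = ((i:ℝ)+2)*D/2 - S := by
      have := pro_eval D S (m+2) (i+1) (by omega) (by omega)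
      rw [this]; push_cast; ring
    have h3 : pro D S (m+2) (m+1-i) = (((m+1-i : ℕ):ℝ) + 1)*D/2 - S := by
      exact pro_eval D S (m+2) (m+1-i) (by omega) (by omega)
    have h4 : prev (pro D S (m+2)) (m+1-i) = (((m-i : ℕ):ℝ) + 1)*D/2 - S := by
      have hne : m + 1 - i ≠ 0 := by omega
      simp only [prev, if_neg hne]
      have he : m + 1 - i - 1 = m - i := by omega
      rw [he]
      exact pro_eval D S (m+2) (m-i) (by omega) (by omega)
    rw [h2, h3, h4]
    have h5 : ((m+1-i : ℕ):ℝ) = (m:ℝ) + 1 - i := by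
      have : i ≤ m + 1 := by omega
      push_cast [Nat.cast_sub this]; ring
    have h6 : ((m-i : ℕ):ℝ) = (m:ℝ) - i := by
      have : i ≤ m := by omega
      push_cast [Nat.cast_sub this]; ring
    rw [h5, h6]; ring
  rw [hf0, hftop, hfm1, Finset.sum_congr rfl hmid]
  have hsum : ∑ i ∈ Finset.range m, ((((i:ℝ))+2)*D/2 - S) * (D/2)
      = ((D/2)*((((m:ℝ))^2+3*m)/2) - (m:ℝ)*S) * (D/2) := by
    have : ∀ i ∈ Finset.range m, ((((i:ℝ))+2)*D/2 - S) * (D/2)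
        = ((i:ℝ))*(D/2)*(D/2) + (2*(D/2) - S)*(D/2) := by intro i _; ring
    rw [Finset.sum_congr rfl this, Finset.sum_add_distrib, ← Finset.sum_mul, ← Finset.sum_mul,
      sum_id_real, Finset.sum_const, Finset.card_range]
    push_cast; ring
  rw [hsum]
  push_cast; ring

end CRseq2

namespace CRseq3
open CRseq CRseq2

/-- the bespoke profile for j = 3. -/
def pro3 (D : ℝ) (k : ℕ) : ℝ := if k = 0 then 0 else if k = 1 then D else 3*D/2

lemma Mf_pro3 (D : ℝ) : Mf (pro3 D) 3 = 2*D^2 := by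
  unfold Mf
  rw [show (3+1) = 4 by rfl]
  rw [Finset.sum_range_succ, Finset.sum_range_succ, Finset.sum_range_succ, Finset.sum_range_succ]
  norm_num [pro3, prev]
  ring

lemma seq_bound (D S : ℝ) (J : ℕ) (g : ℕ → ℝ)
    (hS : 3 ≤ S) (hD : 12*S + 10 ≤ D)
    (hmono : ∀ k, g k ≤ g (k+1)) (hpos : ∀ k, 0 ≤ g k)
    (h1 : D ≤ g 1) (h2 : 3*D ≤ 2 * g 2)
    (hmaster : ∀ j, 3 ≤ j → j ≤ J → Mf g j ≤ g j * (g j + 1)/2) :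
    ∀ j, 1 ≤ j → j ≤ J → ((j:ℝ)+1)*D/2 - S ≤ g j := by
  have hD0 : (0:ℝ) ≤ D := by linarith
  have hmono' : ∀ a b, a ≤ b → g a ≤ g b := fun a b hab =>
    monotone_nat_of_le_succ hmono hab
  intro j
  induction j using Nat.strong_induction_on with
  | _ j IH =>
    intro hj1 hjJ
    rcases Nat.lt_or_ge j 4 with h4 | h4
    · -- j = 1, 2, 3
      interval_cases j
      · push_cast; linarith [h1]
      · push_cast; linarith [h2]
      · -- j = 3 bespoke
        have hdom : Mf (pro3 D) 3 ≤ Mf g 3 := by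
          apply Mf_mono g (pro3 D) 3 (by omega)
          · intro k hk
            interval_cases k
            · simpa [pro3] using hpos 0
            · simpa [pro3] using h1
            · simp only [pro3]; norm_num; linarith
            · simp only [pro3]; norm_num
              calc 3*D/2 ≤ g 2 := by linarith
              _ ≤ g 3 := hmono 2
          · intro k hk
            have hk' : k ≤ 3 := by omega
            clear hk
            interval_cases k <;> simp [pro3] <;> linarith
          · intro k _; exact hmono k
          · intro k hk
            have hk' : k ≤ 2 := by omega
            clear hk
            interval_cases k <;> simp [pro3] <;> linarith
        rw [Mf_pro3] at hdom
        have hm := hmaster 3 (by omega) (by omega)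
        have hkey : 2*D^2 ≤ g 3 * (g 3 + 1)/2 := le_trans hdom hm
        by_contra hcon
        push_neg at hcon
        have hg3 : (0:ℝ) ≤ g 3 := hpos 3
        have hT : g 3 < 2*D - S := by push_cast at hcon; linarith
        nlinarith [mul_nonneg hD0 (by linarith : (0:ℝ) ≤ S), sq_nonneg (g 3),
          mul_le_mul_of_nonneg_left hD (by linarith : (0:ℝ) ≤ S)]
    · -- j ≥ 4
      have hSD : S ≤ D/2 := by linarith
      have hdom : Mf (pro D S j) j ≤ Mf g j := by
        apply Mf_mono g (pro D S j) j (by omega)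
        · intro k hk
          by_cases hk0 : k = 0
          · subst hk0; simpa [pro] using hpos 0
          · by_cases hkj : k ≤ j - 1
            · rw [pro_eval D S j k (by omega) hkj]
              exact IH k (by omega) (by omega) (by omega)
            · have hkj' : k = j := by omega
              subst hkj'
              rw [pro_top D S k (by omega)]
              have h5 : ((k:ℝ))*D/2 - S ≤ g (k-1) := by
                have h6 := IH (k-1) (by omega) (by omega) (by omega)
                have hc : ((k-1 : ℕ):ℝ) = (k:ℝ) - 1 := by
                  have h7 : (1:ℕ) ≤ k := by omega
                  push_cast [Nat.cast_sub h7]; ring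
                rw [hc] at h6
                calc ((k:ℝ))*D/2 - S = ((k:ℝ) - 1 + 1)*D/2 - S := by ring
                _ ≤ g (k-1) := h6
              calc ((k:ℝ))*D/2 - S ≤ g (k-1) := h5
              _ ≤ g k := hmono' (k-1) k (by omega)
        · intro k _
          by_cases hk0 : k = 0
          · subst hk0; simp [pro]
          · simp only [pro, if_neg hk0]
            have h8 : (1:ℕ) ≤ min k (j-1) := by omega
            have hc : (1:ℝ) ≤ ((min k (j-1) : ℕ) : ℝ) := by exact_mod_cast h8
            nlinarith
        · intro k _; exact hmono k
        · intro k _; exact pro_mono D S j (by omega) (by linarith) hSD k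
      rw [Mf_pro D S j (by omega)] at hdom
      have hm := hmaster j (by omega) hjJ
      have hkey := le_trans hdom hm
      by_contra hcon
      push_neg at hcon
      have hjr4 : (4:ℝ) ≤ ((j:ℝ)) := by exact_mod_cast h4
      have hg : (0:ℝ) ≤ g j := hpos j
      set jr := ((j:ℝ)) with hjr
      set T := (jr+1)*D/2 - S with hT
      have hgT : g j < T := hcon
      clear_value jr T
      have hT0 : 0 ≤ T := by
        have h9 : D ≤ (jr+1)*D/2 := by nlinarith
        simp only [hT]; linarith
      have hsq : g j * (g j + 1) < T * (T + 1) := by nlinarith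
      have e1 : D * (jr-3) ≥ (12*S+10) * (jr-3) := by nlinarith
      have e2 : D^2*(jr-3)/4 ≥ D*((12*S+10)*(jr-3))/4 := by nlinarith
      have e3 : D*((12*S+10)*(jr-3))/4 - D*S*(jr-1) - (jr+1)*D/2
          = D*(2*(S+1)*(jr-4)) := by ring
      have e4 : (0:ℝ) ≤ D*(2*(S+1)*(jr-4)) :=
        mul_nonneg hD0 (mul_nonneg (by linarith) (by linarith))
      have hstep : D^2*(jr-3)/4 ≥ D*S*(jr-1) + (jr+1)*D/2 := by linarith
      have hID : 2*(D/2*(D/2*(((jr-2)^2+3*(jr-2))/2) - (jr-2)*S) + (jr*D/2 - S)*(D-S)) - (T^2+T)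
          = D^2*(jr-3)/4 - D*S*(jr-1) - (jr+1)*D/2 + S^2 + S := by
        rw [hT]; ring
      have hTT : T*(T+1) = T^2 + T := by ring
      have hfin : T^2 + T ≤ g j * (g j + 1) := by
        linarith only [sq_nonneg S, hID, hstep, hkey, hS]
      linarith only [hfin, hsq, hTT]

end CRseq3

namespace CRdig
open CRseq CRseq2 CRseq3
open scoped Classical

variable {α : Type} (R : α → α → Prop)

def reachIn : ℕ → α → α → Prop
  | 0, u, w => u = w
  | (k+1), u, w => ∃ z, R u z ∧ reachIn k z w

lemma reachIn_trans {a b : ℕ} {u v w : α} (h1 : reachIn R a u v) (h2 : reachIn R b v w) :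
    reachIn R (a+b) u w := by
  induction a generalizing u with
  | zero =>
    have : u = v := h1
    subst this
    simpa using h2
  | succ c ih =>
    obtain ⟨z, hz, hr⟩ := h1
    have : c + 1 + b = (c + b) + 1 := by omega
    rw [this]
    exact ⟨z, hz, ih hr⟩

lemma reachIn_pos {k : ℕ} {u w : α} (h : reachIn R k u w) (hne : u ≠ w) : 1 ≤ k := by
  rcases k with _ | k
  · exact absurd h hne
  · omega

variable [Fintype α]

noncomputable def ball (j : ℕ) (u : α) : Finset α :=
  Finset.univ.filter (fun w => ∃ k, k ≤ j ∧ reachIn R k u w)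

lemma mem_ball {j : ℕ} {u w : α} : w ∈ ball R j u ↔ ∃ k, k ≤ j ∧ reachIn R k u w := by
  simp [ball]

lemma self_mem_ball {j : ℕ} {u : α} : u ∈ ball R j u := (mem_ball R).2 ⟨0, by omega, rfl⟩

lemma ball_mono {j j' : ℕ} (h : j ≤ j') {u : α} : ball R j u ⊆ ball R j' u := by
  intro w hw
  obtain ⟨k, hk, hr⟩ := (mem_ball R).1 hw
  exact (mem_ball R).2 ⟨k, by omega, hr⟩

lemma ball_comp {a b : ℕ} {u v w : α} (h1 : v ∈ ball R a u) (h2 : w ∈ ball R b v) :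
    w ∈ ball R (a+b) u := by
  obtain ⟨k1, hk1, hr1⟩ := (mem_ball R).1 h1
  obtain ⟨k2, hk2, hr2⟩ := (mem_ball R).1 h2
  exact (mem_ball R).2 ⟨k1 + k2, by omega, reachIn_trans R hr1 hr2⟩

variable [Nonempty α]

noncomputable def Gm (j : ℕ) : ℕ :=
  Finset.univ.inf' Finset.univ_nonempty (fun u => (ball R j u).card)

lemma Gm_le (j : ℕ) (u : α) : Gm R j ≤ (ball R j u).card :=
  Finset.inf'_le _ (Finset.mem_univ u)

lemma exists_Gm (j : ℕ) : ∃ u : α, (ball R j u).card = Gm R j := by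
  obtain ⟨u, _, hu⟩ := Finset.exists_mem_eq_inf' (Finset.univ_nonempty) (fun u => (ball R j u).card)
  exact ⟨u, hu.symm⟩

lemma Gm_mono {i j : ℕ} (h : i ≤ j) : Gm R i ≤ Gm R j := by
  obtain ⟨x, hx⟩ := exists_Gm R j
  calc Gm R i ≤ (ball R i x).card := Gm_le R i x
  _ ≤ (ball R j x).card := Finset.card_le_card (ball_mono R h)
  _ = Gm R j := hx

lemma Gm_pos (j : ℕ) : 1 ≤ Gm R j := by
  apply Finset.le_inf'
  intro u _
  exact Finset.card_pos.2 ⟨u, self_mem_ball R⟩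

lemma no_both (t : ℕ) (hban : ∀ (u : α) (k : ℕ), 1 ≤ k → k ≤ t → ¬ reachIn R k u u)
    {u w : α} (hne : u ≠ w) {a b : ℕ} (hab : a + b ≤ t)
    (h1 : w ∈ ball R a u) (h2 : u ∈ ball R b w) : False := by
  obtain ⟨k1, hk1, hr1⟩ := (mem_ball R).1 h1
  obtain ⟨k2, hk2, hr2⟩ := (mem_ball R).1 h2
  have hk1' : 1 ≤ k1 := reachIn_pos R hr1 hne
  exact hban u (k1+k2) (by omega) (by omega) (reachIn_trans R hr1 hr2)

lemma engine (t : ℕ) (hban : ∀ (u : α) (k : ℕ), 1 ≤ k → k ≤ t → ¬ reachIn R k u u)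
    (T : Finset α) (ρ : α → ℕ) (hρ : ∀ u ∈ T, ∀ w ∈ T, ρ u + ρ w ≤ t) :
    2 * ∑ u ∈ T, ((ball R (ρ u) u) ∩ T).card ≤ T.card * (T.card + 1) := by
  set Ω := (T ×ˢ T).filter (fun q => q.2 ∈ ball R (ρ q.1) q.1) with hΩ
  have hcard : Ω.card = ∑ u ∈ T, ((ball R (ρ u) u) ∩ T).card := by
    have hrw : Ω = T.biUnion (fun u => ((ball R (ρ u) u) ∩ T).image (fun w => (u, w))) := by
      ext ⟨a, b⟩
      simp only [hΩ, Finset.mem_filter, Finset.mem_product, Finset.mem_biUnion,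
        Finset.mem_image, Finset.mem_inter]
      constructor
      · rintro ⟨⟨ha, hb⟩, hball⟩
        exact ⟨a, ha, b, ⟨hball, hb⟩, rfl⟩
      · rintro ⟨u, hu, w, ⟨hball, hw⟩, heq⟩
        injection heq with h1 h2
        subst h1; subst h2
        exact ⟨⟨hu, hw⟩, hball⟩
    rw [hrw, Finset.card_biUnion]
    · apply Finset.sum_congr rfl
      intro u _
      apply Finset.card_image_of_injective
      intro a b hab
      simpa using hab
    · intro a _ b _ hab
      simp only [Finset.disjoint_left, Finset.mem_image]
      rintro q ⟨w, _, rfl⟩ ⟨w', _, heq'⟩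
      exact hab (congrArg Prod.fst heq').symm
  have hΩsub : Ω ⊆ T ×ˢ T := Finset.filter_subset _ _
  set Ωd := Ω.filter (fun q => q.1 = q.2) with hΩd
  set Ωo := Ω.filter (fun q => ¬ q.1 = q.2) with hΩo
  have hsplit : Ωd.card + Ωo.card = Ω.card := Finset.card_filter_add_card_filter_not _
  have hd : Ωd.card ≤ T.card := by
    apply Finset.card_le_card_of_injOn Prod.fst
    · intro q hq
      rw [hΩd, Finset.mem_coe, Finset.mem_filter] at hq
      exact (Finset.mem_product.1 (hΩsub hq.1)).1
    · intro q hq q' hq' heq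
      simp only [Finset.mem_coe, hΩd, Finset.mem_filter] at hq hq'
      ext
      · exact heq
      · rw [← hq.2, ← hq'.2]; exact heq
  have hodisj : Disjoint Ωo (Ωo.image Prod.swap) := by
    rw [Finset.disjoint_left]
    intro q hq hq'
    rw [hΩo, Finset.mem_filter] at hq
    obtain ⟨hqΩ, hqne⟩ := hq
    rw [Finset.mem_image] at hq'
    obtain ⟨r, hr, hrq⟩ := hq'
    rw [hΩo, Finset.mem_filter] at hr
    obtain ⟨hrΩ, _⟩ := hr
    rw [hΩ, Finset.mem_filter] at hqΩ hrΩ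
    have h1 : q.2 ∈ ball R (ρ q.1) q.1 := hqΩ.2
    have h2 : r.2 ∈ ball R (ρ r.1) r.1 := hrΩ.2
    have hr1 : r.1 = q.2 := by rw [← hrq]; rfl
    have hr2 : r.2 = q.1 := by rw [← hrq]; rfl
    rw [hr1, hr2] at h2
    have hq1T : q.1 ∈ T := (Finset.mem_product.1 hqΩ.1).1
    have hq2T : q.2 ∈ T := (Finset.mem_product.1 hqΩ.1).2
    exact no_both R t hban hqne (hρ q.1 hq1T q.2 hq2T) h1 h2
  have hsubo : Ωo ∪ Ωo.image Prod.swap ⊆ T.offDiag := by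
    intro q hq
    rw [Finset.mem_union] at hq
    rw [Finset.mem_offDiag]
    rcases hq with hq | hq
    · rw [hΩo, Finset.mem_filter] at hq
      have := Finset.mem_product.1 (hΩsub hq.1)
      exact ⟨this.1, this.2, hq.2⟩
    · rw [Finset.mem_image] at hq
      obtain ⟨r, hr, hrq⟩ := hq
      rw [hΩo, Finset.mem_filter] at hr
      have := Finset.mem_product.1 (hΩsub hr.1)
      subst hrq
      exact ⟨this.2, this.1, fun h => hr.2 h.symm⟩
  have himg : (Ωo.image Prod.swap).card = Ωo.card :=
    Finset.card_image_of_injective _ Prod.swap_injective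
  have ho2 : Ωo.card + Ωo.card ≤ T.offDiag.card := by
    calc Ωo.card + Ωo.card = Ωo.card + (Ωo.image Prod.swap).card := by rw [himg]
    _ = (Ωo ∪ Ωo.image Prod.swap).card := (Finset.card_union_of_disjoint hodisj).symm
    _ ≤ T.offDiag.card := Finset.card_le_card hsubo
  have hoff : T.offDiag.card = T.card * T.card - T.card := Finset.offDiag_card T
  have hTT : T.card ≤ T.card * T.card := by
    rcases Nat.eq_zero_or_pos T.card with h | h
    · simp [h]
    · calc T.card = T.card * 1 := by ring
      _ ≤ T.card * T.card := Nat.mul_le_mul_left _ h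
  have hgoal : T.card * (T.card + 1) = T.card * T.card + T.card := by ring
  obtain ⟨P, hP⟩ : ∃ P, P = T.card * T.card := ⟨_, rfl⟩
  rw [← hP] at hoff hTT hgoal
  rw [hgoal]
  omega

lemma master (t : ℕ) (hban : ∀ (u : α) (k : ℕ), 1 ≤ k → k ≤ t → ¬ reachIn R k u u)
    (j : ℕ) (hj : 1 ≤ j) (h2j : 2*j ≤ t) :
    Mf (fun i => ((Gm R i : ℕ) : ℝ)) j ≤ (Gm R j : ℝ) * ((Gm R j : ℝ) + 1)/2 := by
  obtain ⟨x, hx⟩ := exists_Gm R j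
  set T := ball R j x with hT
  -- distance function
  have hdex : ∀ u ∈ T, ∃ k, reachIn R k x u := by
    intro u hu
    obtain ⟨k, _, hr⟩ := (mem_ball R).1 hu
    exact ⟨k, hr⟩
  set d : α → ℕ := fun u => if h : ∃ k, reachIn R k x u then Nat.find h else 0 with hd
  have hdreach : ∀ u ∈ T, reachIn R (d u) x u := by
    intro u hu
    have h := hdex u hu
    simp only [hd, dif_pos h]
    exact Nat.find_spec h
  have hdle : ∀ u, ∀ k, reachIn R k x u → d u ≤ k := by
    intro u k hr
    have h : ∃ k, reachIn R k x u := ⟨k, hr⟩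
    simp only [hd, dif_pos h]
    exact Nat.find_le hr
  have hdball : ∀ u ∈ T, ∀ ℓ, (u ∈ ball R ℓ x ↔ d u ≤ ℓ) := by
    intro u hu ℓ
    constructor
    · intro h
      obtain ⟨k, hk, hr⟩ := (mem_ball R).1 h
      exact le_trans (hdle u k hr) hk
    · intro h
      exact (mem_ball R).2 ⟨d u, h, hdreach u hu⟩
  have hdj : ∀ u ∈ T, d u ≤ j := by
    intro u hu
    exact (hdball u hu j).1 hu
  have hsub : ∀ u ∈ T, ball R (j - d u) u ⊆ T := by
    intro u hu w hw
    have hduj := hdj u hu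
    have h1 : u ∈ ball R (d u) x := (mem_ball R).2 ⟨d u, le_rfl, hdreach u hu⟩
    have := ball_comp R h1 hw
    rw [hT]
    exact ball_mono R (by omega) this
  -- engine application
  have heng := engine R t hban T (fun u => j - d u) (by
    intro u hu w hw
    have h1 := hdj u hu
    have h2 := hdj w hw
    omega)
  have heq1 : ∀ u ∈ T, (ball R (j - d u) u ∩ T) = ball R (j - d u) u := by
    intro u hu
    exact Finset.inter_eq_left.2 (hsub u hu)
  have heng2 : 2 * ∑ u ∈ T, (ball R (j - d u) u).card ≤ T.card * (T.card + 1) := by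
    calc 2 * ∑ u ∈ T, (ball R (j - d u) u).card
        = 2 * ∑ u ∈ T, ((ball R (j - d u) u) ∩ T).card := by
          congr 1
          exact Finset.sum_congr rfl (fun u hu => by rw [heq1 u hu])
    _ ≤ T.card * (T.card + 1) := heng
  have hlow : ∑ u ∈ T, Gm R (j - d u) ≤ ∑ u ∈ T, (ball R (j - d u) u).card :=
    Finset.sum_le_sum (fun u _ => Gm_le R _ u)
  -- fiberwise rewriting
  have hfib : ∑ u ∈ T, Gm R (j - d u)
      = ∑ ℓ ∈ Finset.range (j+1), (T.filter (fun u => d u = ℓ)).card * Gm R (j - ℓ) := by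
    rw [← Finset.sum_fiberwise_of_maps_to (g := d) (t := Finset.range (j+1))
      (fun u hu => Finset.mem_range.2 (by have := hdj u hu; omega))]
    apply Finset.sum_congr rfl
    intro ℓ _
    have hcongr : ∀ u ∈ T.filter (fun u => d u = ℓ), Gm R (j - d u) = Gm R (j - ℓ) := by
      intro u hu
      rw [(Finset.mem_filter.1 hu).2]
    rw [Finset.sum_congr rfl hcongr, Finset.sum_const, smul_eq_mul]
  -- fiber cardinalities
  have hfcard : ∀ ℓ, 1 ≤ ℓ → ℓ ≤ j →
      (T.filter (fun u => d u = ℓ)).card = (ball R ℓ x).card - (ball R (ℓ-1) x).card := by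
    intro ℓ hℓ1 hℓj
    have hset : T.filter (fun u => d u = ℓ) = ball R ℓ x \ ball R (ℓ-1) x := by
      ext u
      simp only [Finset.mem_filter, Finset.mem_sdiff]
      constructor
      · rintro ⟨hu, hdu⟩
        constructor
        · exact (hdball u hu ℓ).2 (by omega)
        · intro hmem
          have := (hdball u hu (ℓ-1)).1 hmem
          omega
      · rintro ⟨h1, h2⟩
        have huT : u ∈ T := by
          rw [hT]; exact ball_mono R hℓj h1
        constructor
        · exact huT
        · have ha := (hdball u huT ℓ).1 h1
          have hb : ¬ (d u ≤ ℓ - 1) := fun h => h2 ((hdball u huT (ℓ-1)).2 h)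
          omega
    rw [hset, Finset.card_sdiff_of_subset (ball_mono R (by omega))]
  have hfcard0 : (T.filter (fun u => d u = 0)).card = (ball R 0 x).card := by
    have hset : T.filter (fun u => d u = 0) = ball R 0 x := by
      ext u
      simp only [Finset.mem_filter]
      constructor
      · rintro ⟨hu, hdu⟩
        exact (hdball u hu 0).2 (by omega)
      · intro h1
        have huT : u ∈ T := by rw [hT]; exact ball_mono R (by omega) h1
        exact ⟨huT, by have := (hdball u huT 0).1 h1; omega⟩
    rw [hset]
  -- now go to the reals
  set g : ℕ → ℝ := fun i => ((Gm R i : ℕ) : ℝ) with hg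
  set b : ℕ → ℝ := fun ℓ => ((ball R ℓ x).card : ℝ) with hb
  have hreal : (↑(∑ u ∈ T, Gm R (j - d u)) : ℝ)
      = ∑ ℓ ∈ Finset.range (j+1), (b ℓ - prev b ℓ) * g (j - ℓ) := by
    rw [hfib]
    push_cast
    apply Finset.sum_congr rfl
    intro ℓ hℓ
    rw [Finset.mem_range] at hℓ
    rcases Nat.eq_zero_or_pos ℓ with h0 | hpos
    · subst h0
      rw [hfcard0]
      simp [prev, hb, hg]
    · rw [hfcard ℓ hpos (by omega)]
      have hsubc : (ball R (ℓ-1) x).card ≤ (ball R ℓ x).card :=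
        Finset.card_le_card (ball_mono R (by omega))
      have hprev : prev b ℓ = ((ball R (ℓ-1) x).card : ℝ) := by
        simp only [prev, hb]
        have : ℓ ≠ 0 := by omega
        simp [this]
      rw [hprev, hb]
      push_cast [Nat.cast_sub hsubc]
      ring
  have habel : ∑ ℓ ∈ Finset.range (j+1), (b ℓ - prev b ℓ) * g (j - ℓ)
      = ∑ ℓ ∈ Finset.range (j+1), b ℓ * (g (j-ℓ) - prev g (j-ℓ)) := abel b g j
  have hdom : Mf g j ≤ ∑ ℓ ∈ Finset.range (j+1), b ℓ * (g (j-ℓ) - prev g (j-ℓ)) := by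
    unfold Mf
    apply Finset.sum_le_sum
    intro ℓ hℓ
    have h1 : g ℓ ≤ b ℓ := by
      simp only [hg, hb]
      exact_mod_cast Gm_le R ℓ x
    have h2 : 0 ≤ g (j-ℓ) - prev g (j-ℓ) := by
      have hga : ∀ m, (0:ℝ) ≤ g m := fun m => Nat.cast_nonneg _
      rcases Nat.eq_zero_or_pos (j-ℓ) with h0 | hpos
      · rw [h0]
        simp only [prev, if_pos rfl]
        simpa using hga 0
      · have hp : prev g (j-ℓ) = g (j-ℓ-1) := by
          simp only [prev]
          have : j - ℓ ≠ 0 := by omega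
          simp [this]
        rw [hp]
        have hmm := Gm_mono R (show j-ℓ-1 ≤ j-ℓ by omega)
        have hc : g (j-ℓ-1) ≤ g (j-ℓ) := by
          simp only [hg]
          exact_mod_cast hmm
        linarith
    apply mul_le_mul_of_nonneg_right h1 h2
  -- assemble
  have hTcard : T.card = Gm R j := hx
  have hfinal : (↑(∑ u ∈ T, Gm R (j - d u)) : ℝ) ≤ (Gm R j : ℝ) * ((Gm R j : ℝ) + 1)/2 := by
    have h2 : (2:ℝ) * (↑(∑ u ∈ T, Gm R (j - d u)) : ℝ) ≤ (Gm R j : ℝ) * ((Gm R j : ℝ) + 1) := by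
      have h3 := le_trans (Nat.mul_le_mul_left 2 hlow) heng2
      rw [hTcard] at h3
      exact_mod_cast h3
    linarith
  calc Mf g j ≤ ∑ ℓ ∈ Finset.range (j+1), b ℓ * (g (j-ℓ) - prev g (j-ℓ)) := hdom
  _ = (↑(∑ u ∈ T, Gm R (j - d u)) : ℝ) := by rw [hreal, habel]
  _ ≤ (Gm R j : ℝ) * ((Gm R j : ℝ) + 1)/2 := hfinal

lemma base2 (t Dd : ℕ) (hban : ∀ (u : α) (k : ℕ), 1 ≤ k → k ≤ t → ¬ reachIn R k u u)
    (ht : 2 ≤ t) (hdeg : ∀ u : α, Dd ≤ (ball R 1 u).card) (hDd : 2 ≤ Dd) :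
    3 * Dd ≤ 2 * Gm R 2 := by
  obtain ⟨x, hx⟩ := exists_Gm R 2
  set S1 : Finset α := (ball R 1 x).erase x with hS1
  have hS1sub : S1 ⊆ ball R 2 x := by
    intro u hu
    exact ball_mono R (by omega) (Finset.mem_of_mem_erase hu)
  have hxball : x ∈ ball R 2 x := self_mem_ball R
  have hS1card : (ball R 1 x).card = S1.card + 1 := by
    rw [hS1]
    rw [Finset.card_erase_of_mem (self_mem_ball R)]
    have : 1 ≤ (ball R 1 x).card := Finset.card_pos.2 ⟨x, self_mem_ball R⟩
    omega
  have hσ : Dd ≤ S1.card + 1 := by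
    rw [← hS1card]; exact hdeg x
  -- each u in S1 has ball 1 u inside ball 2 x, not containing x
  have hb1 : ∀ u ∈ S1, ball R 1 u ⊆ (ball R 2 x).erase x := by
    intro u hu w hw
    have hune : u ≠ x := Finset.ne_of_mem_erase hu
    have hu1 : u ∈ ball R 1 x := Finset.mem_of_mem_erase hu
    rw [Finset.mem_erase]
    constructor
    · intro hwx
      subst hwx
      exact no_both R t hban (Ne.symm hune) (by omega : 1 + 1 ≤ t) hu1 hw
    · have := ball_comp R hu1 hw
      exact ball_mono R (by omega) this
  -- engine on S1 with radius 1
  have heng := engine R t hban S1 (fun _ => 1) (by intro u _ w _; omega)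
  -- degree lower bound
  have hdeg2 : ∀ u ∈ S1, Dd ≤ ((ball R 1 u) ∩ S1).card + ((ball R 2 x).erase x).card - S1.card := by
    intro u hu
    have hsplit : ((ball R 1 u) ∩ S1).card + ((ball R 1 u) \ S1).card = (ball R 1 u).card :=
      Finset.card_inter_add_card_sdiff _ _
    have hsd : ((ball R 1 u) \ S1).card ≤ ((ball R 2 x).erase x).card - S1.card := by
      have hsub2 : (ball R 1 u) \ S1 ⊆ ((ball R 2 x).erase x) \ S1 :=
        Finset.sdiff_subset_sdiff (hb1 u hu) (le_refl _)
      have hcards : (((ball R 2 x).erase x) \ S1).card = ((ball R 2 x).erase x).card - S1.card := by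
        apply Finset.card_sdiff_of_subset
        intro v hv
        rw [Finset.mem_erase]
        exact ⟨Finset.ne_of_mem_erase hv, hS1sub hv⟩
      calc ((ball R 1 u) \ S1).card ≤ (((ball R 2 x).erase x) \ S1).card :=
            Finset.card_le_card hsub2
      _ = ((ball R 2 x).erase x).card - S1.card := hcards
    have hσE : S1.card ≤ ((ball R 2 x).erase x).card := by
      apply Finset.card_le_card
      intro v hv
      rw [Finset.mem_erase]
      exact ⟨Finset.ne_of_mem_erase hv, hS1sub hv⟩
    have := hdeg u
    omega
  -- sum up
  have hB2 : ((ball R 2 x).erase x).card + 1 = Gm R 2 := by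
    rw [Finset.card_erase_of_mem hxball]
    have h1 : 1 ≤ (ball R 2 x).card := Finset.card_pos.2 ⟨x, hxball⟩
    rw [← hx]
    omega
  -- from the engine: 2 * Σ (ball ∩ S1) ≤ σ(σ+1)
  -- from degrees: Σ (ball ∩ S1) ≥ σ * (Dd + σ - (B2card - 1))
  set σ := S1.card with hσdef
  set B2 := Gm R 2 with hB2def
  have hE : ((ball R 2 x).erase x).card = B2 - 1 := by omega
  rcases Nat.eq_zero_or_pos σ with hσ0 | hσpos
  · -- σ = 0 : then Dd ≤ 1, contradiction with hDd
    omega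
  · have hsum : σ * Dd ≤ (∑ u ∈ S1, ((ball R 1 u) ∩ S1).card) + σ * ((B2 - 1) - σ) := by
      calc σ * Dd = ∑ _u ∈ S1, Dd := by rw [Finset.sum_const, smul_eq_mul]
      _ ≤ ∑ u ∈ S1, (((ball R 1 u) ∩ S1).card + ((B2-1) - σ)) := by
          apply Finset.sum_le_sum
          intro u hu
          have := hdeg2 u hu
          rw [hE] at this
          omega
      _ = (∑ u ∈ S1, ((ball R 1 u) ∩ S1).card) + σ * ((B2 - 1) - σ) := by
          rw [Finset.sum_add_distrib, Finset.sum_const, smul_eq_mul]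
    have heng' : 2 * ∑ u ∈ S1, ((ball R 1 u) ∩ S1).card ≤ σ * (σ + 1) := heng
    -- combine:  2σ Dd ≤ σ(σ+1) + 2σ(B2-1-σ);  cancel σ
    have hcomb : σ * (2 * Dd) ≤ σ * ((σ + 1) + 2*((B2-1) - σ)) := by
      have e1 : σ * (2 * Dd) = 2 * (σ * Dd) := by ring
      have e2 : σ * ((σ + 1) + 2*((B2-1) - σ)) = σ*(σ+1) + 2*(σ * ((B2-1) - σ)) := by ring
      rw [e1, e2]
      omega
    have hcan : 2 * Dd ≤ (σ + 1) + 2*((B2-1) - σ) := Nat.le_of_mul_le_mul_left (by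
      calc σ * (2*Dd) ≤ _ := hcomb
      ) hσpos
    -- also σ + 1 ≤ B2 : S1 ∪ {x} ⊆ ball 2 x
    have hσB : σ + 1 ≤ B2 := by
      have : (ball R 1 x).card ≤ (ball R 2 x).card := Finset.card_le_card (ball_mono R (by omega))
      omega
    omega

lemma final_count (t J : ℕ) (hban : ∀ (u : α) (k : ℕ), 1 ≤ k → k ≤ t → ¬ reachIn R k u u)
    (hJ : 2*J ≤ t) : 2 * Gm R J ≤ Fintype.card α + 1 := by
  have heng := engine R t hban Finset.univ (fun _ => J) (by intro u _ w _; omega)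
  have hinter : ∀ u : α, (ball R J u) ∩ Finset.univ = ball R J u := fun u => Finset.inter_univ _
  have hlow : ∑ _u ∈ (Finset.univ : Finset α), Gm R J ≤ ∑ u ∈ (Finset.univ : Finset α), ((ball R J u) ∩ Finset.univ).card := by
    apply Finset.sum_le_sum
    intro u _
    rw [hinter u]
    exact Gm_le R J u
  rw [Finset.sum_const, smul_eq_mul, Finset.card_univ] at hlow
  have hN : 1 ≤ Fintype.card α := Fintype.card_pos
  have h2 : 2 * (Fintype.card α * Gm R J) ≤ Fintype.card α * (Fintype.card α + 1) := by
    calc 2 * (Fintype.card α * Gm R J) ≤ 2 * ∑ u ∈ (Finset.univ : Finset α), ((ball R J u) ∩ Finset.univ).card := by omega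
    _ ≤ (Finset.univ : Finset α).card * ((Finset.univ : Finset α).card + 1) := heng
    _ = Fintype.card α * (Fintype.card α + 1) := by rw [Finset.card_univ]
  have h3 : Fintype.card α * (2 * Gm R J) ≤ Fintype.card α * (Fintype.card α + 1) := by
    calc Fintype.card α * (2 * Gm R J) = 2 * (Fintype.card α * Gm R J) := by ring
    _ ≤ _ := h2
  exact Nat.le_of_mul_le_mul_left h3 hN

/-- The digraph lemma: min outdegree and no short closed walks force many vertices. -/
lemma dig (t Dd : ℕ) (ht : 2 ≤ t) (hD : 12*(t+1) + 10 ≤ Dd)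
    (hdeg : ∀ u : α, Dd ≤ (ball R 1 u).card)
    (hban : ∀ (u : α) (k : ℕ), 1 ≤ k → k ≤ t → ¬ reachIn R k u u) :
    (t/2 + 1) * Dd ≤ Fintype.card α + 2*(t+1) + 1 := by
  set J := t/2 with hJ
  have hJ1 : 1 ≤ J := by omega
  have h2J : 2*J ≤ t := by omega
  have hG1 : Dd ≤ Gm R 1 := by
    apply Finset.le_inf'
    intro u _
    exact hdeg u
  have hseq := seq_bound (Dd : ℝ) ((t:ℝ)+1) J (fun i => ((Gm R i : ℕ):ℝ))
    (by push_cast; exact_mod_cast (by omega : (3:ℕ) ≤ t + 1))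
    (by push_cast; exact_mod_cast (by omega : 12*(t+1) + 10 ≤ Dd))
    (by intro k; exact_mod_cast Gm_mono R (Nat.le_succ k))
    (by intro k; positivity)
    (by exact_mod_cast hG1)
    (by exact_mod_cast base2 R t Dd hban ht hdeg (by omega))
    (by
      intro j hj3 hjJ
      exact master R t hban j (by omega) (by omega))
    J hJ1 (le_refl J)
  have hfc := final_count R t J hban h2J
  -- combine in ℝ
  have hfc' : (2:ℝ) * (Gm R J : ℝ) ≤ (Fintype.card α : ℝ) + 1 := by exact_mod_cast hfc
  have hfinal : ((J:ℝ)+1) * (Dd:ℝ) ≤ (Fintype.card α : ℝ) + 2*((t:ℝ)+1) + 1 := by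
    nlinarith [hseq, hfc']
  have : (J+1) * Dd ≤ Fintype.card α + 2*(t+1) + 1 := by exact_mod_cast hfinal
  exact this

end CRdig

namespace CRmain
open CRdig
open scoped Classical

lemma reachIn_snoc {α : Type} (R : α → α → Prop) {k : ℕ} {u v w : α}
    (h : reachIn R k u v) (hr : R v w) : reachIn R (k+1) u w :=
  reachIn_trans R h ⟨w, hr, rfl⟩

lemma walk_of_reachIn {α : Type} (R : α → α → Prop) {k : ℕ} {u w : α}
    (h : reachIn R k u w) :
    ∃ f : ℕ → α, f 0 = u ∧ f k = w ∧ ∀ i, i < k → R (f i) (f (i+1)) := by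
  induction k generalizing u with
  | zero =>
    have : u = w := h
    exact ⟨fun _ => u, rfl, by rw [this], by intro i hi; omega⟩
  | succ c ih =>
    obtain ⟨z, hz, hr⟩ := h
    obtain ⟨f, hf0, hfk, hstep⟩ := ih hr
    refine ⟨fun i => if i = 0 then u else f (i-1), by simp, ?_, ?_⟩
    · simp only [Nat.succ_ne_zero, if_false]
      simpa using hfk
    · intro i hi
      rcases Nat.eq_zero_or_pos i with h0 | hpos
      · subst h0
        simp only [if_pos rfl, Nat.one_ne_zero, if_false]
        simpa [hf0] using hz
      · have h1 : i ≠ 0 := by omega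
        have h2 : i + 1 ≠ 0 := by omega
        simp only [if_neg h1, if_neg h2]
        have h3 : i + 1 - 1 = (i-1) + 1 := by omega
        rw [h3]
        exact hstep (i-1) (by omega)

lemma reach_of_walk {α : Type} (R : α → α → Prop) (f : ℕ → α) (a b : ℕ) (hab : a ≤ b)
    (hstep : ∀ i, a ≤ i → i < b → R (f i) (f (i+1))) :
    reachIn R (b - a) (f a) (f b) := by
  induction b with
  | zero =>
    have : a = 0 := by omega
    subst this
    exact rfl
  | succ c ih =>
    rcases Nat.eq_or_lt_of_le hab with h | h
    · rw [h]
      simp only [Nat.sub_self]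
      exact rfl
    · have hac : a ≤ c := by omega
      have hr := ih hac (fun i hi hic => hstep i hi (by omega))
      have := reachIn_snoc R hr (hstep c hac (by omega))
      have he : c + 1 - a = (c - a) + 1 := by omega
      rw [he]
      exact this

variable {V : Type} [Fintype V] [DecidableEq V]

/-- ordered pairs of distinct vertices -/
def PairT (V : Type) := {p : V × V // p.1 ≠ p.2}

instance : Fintype (PairT V) := by unfold PairT; infer_instance

/-- the co-neighbourhood digraph relation on ordered pairs -/
def Rel (E : Set (Finset V)) : PairT V → PairT V → Prop := fun p q =>
  ({p.val.1, p.val.2, q.val.1} : Finset V) ∈ E ∧ ({p.val.1, p.val.2, q.val.2} : Finset V) ∈ E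

lemma no_loop (E : Set (Finset V)) (hE3 : ∀ e ∈ E, e.card = 3) (p : PairT V) :
    ¬ Rel E p p := by
  rintro ⟨h1, -⟩
  have hcard := hE3 _ h1
  have heq : ({p.val.1, p.val.2, p.val.1} : Finset V) = {p.val.1, p.val.2} := by
    ext z
    simp only [Finset.mem_insert, Finset.mem_singleton]
    tauto
  rw [heq] at hcard
  have : ({p.val.1, p.val.2} : Finset V).card ≤ 2 := by
    apply le_trans (Finset.card_insert_le _ _)
    simp
  omega

lemma rel_transfer (E : Set (Finset V)) {p q r : PairT V}
    (hpq : ({p.val.1, p.val.2} : Finset V) = {q.val.1, q.val.2}) (h : Rel E p r) :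
    Rel E q r := by
  obtain ⟨h1, h2⟩ := h
  have key : ∀ z : V, ({q.val.1, q.val.2, z} : Finset V) = {p.val.1, p.val.2, z} := by
    intro z
    have e1 : ({q.val.1, q.val.2, z} : Finset V) = {q.val.1, q.val.2} ∪ {z} := by
      ext w
      simp only [Finset.mem_insert, Finset.mem_singleton, Finset.mem_union]
      tauto
    have e2 : ({p.val.1, p.val.2, z} : Finset V) = {p.val.1, p.val.2} ∪ {z} := by
      ext w
      simp only [Finset.mem_insert, Finset.mem_singleton, Finset.mem_union]
      tauto
    rw [e1, e2, hpq]
  exact ⟨by rw [key]; exact h1, by rw [key]; exact h2⟩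

lemma extract (E : Set (Finset V)) (hE3 : ∀ e ∈ E, e.card = 3) (t k : ℕ)
    (hk1 : 1 ≤ k) (hkt : k ≤ t) (p₀ : PairT V) (hreach : reachIn (Rel E) k p₀ p₀) :
    ∃ s : ℕ, 2 ≤ s ∧ s ≤ t ∧
      ∃ u v : ZMod s → V,
        (∀ i, u i ≠ v i) ∧
        (∀ i j : ZMod s, i ≠ j → ({u i, v i} : Finset V) ≠ ({u j, v j} : Finset V)) ∧
        (∀ i : ZMod s, ({u i, v i, u (i + 1)} : Finset V) ∈ E ∧
          ({u i, v i, v (i + 1)} : Finset V) ∈ E) := by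
  have hex : ∃ m, 1 ≤ m ∧ m ≤ t ∧ ∃ p : PairT V, reachIn (Rel E) m p p :=
    ⟨k, hk1, hkt, p₀, hreach⟩
  set s := Nat.find hex with hsdef
  obtain ⟨hs1, hst, p, hp⟩ := Nat.find_spec hex
  rw [← hsdef] at hs1 hst hp
  have hmin : ∀ m, m < s → ¬(1 ≤ m ∧ m ≤ t ∧ ∃ q : PairT V, reachIn (Rel E) m q q) :=
    fun m hm => Nat.find_min hex hm
  have hs2 : 2 ≤ s := by
    by_contra hcon
    have hs1' : s = 1 := by omega
    rw [hs1'] at hp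
    obtain ⟨z, hz, hz0⟩ := hp
    have : z = p := hz0
    subst this
    exact no_loop E hE3 z hz
  obtain ⟨f, hf0, hfs, hstep⟩ := walk_of_reachIn (Rel E) hp
  have hdist : ∀ i j, i < j → j < s →
      ({(f i).val.1, (f i).val.2} : Finset V) ≠ {(f j).val.1, (f j).val.2} := by
    intro i j hij hjs heq
    have hR : Rel E (f i) (f (j+1)) :=
      rel_transfer E heq.symm (hstep j hjs)
    have r1 : reachIn (Rel E) i p (f i) := by
      have := reach_of_walk (Rel E) f 0 i (by omega) (fun m hm hms => hstep m (by omega))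
      rw [hf0] at this
      simpa using this
    have r2 : reachIn (Rel E) (s - (j+1)) (f (j+1)) p := by
      have := reach_of_walk (Rel E) f (j+1) s (by omega) (fun m hm hms => hstep m (by omega))
      rw [hfs] at this
      exact this
    have rall : reachIn (Rel E) (i + 1 + (s - (j+1))) p p :=
      reachIn_trans (Rel E) (reachIn_snoc (Rel E) r1 hR) r2
    have hL : i + 1 + (s - (j+1)) < s := by omega
    exact hmin _ hL ⟨by omega, by omega, p, rall⟩
  haveI : NeZero s := ⟨by omega⟩
  refine ⟨s, hs2, hst, fun i => (f i.val).val.1, fun i => (f i.val).val.2, ?_, ?_, ?_⟩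
  · intro i
    exact (f i.val).property
  · intro i j hij heq
    have hvne : i.val ≠ j.val := by
      intro h
      apply hij
      have h1 : ((i.val : ℕ) : ZMod s) = i := ZMod.natCast_zmod_val i
      have h2 : ((j.val : ℕ) : ZMod s) = j := ZMod.natCast_zmod_val j
      rw [← h1, ← h2, h]
    rcases Nat.lt_or_ge i.val j.val with h | h
    · exact hdist i.val j.val h (ZMod.val_lt j) heq
    · exact hdist j.val i.val (by omega) (ZMod.val_lt i) heq.symm
  · intro i
    have hstep' : Rel E (f i.val) (f ((i+1).val)) := by
      rcases Nat.lt_or_ge (i.val + 1) s with h | h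
      · have hv : (i + 1 : ZMod s).val = i.val + 1 := by
          haveI : Fact (1 < s) := ⟨by omega⟩
          have h1 : (1 : ZMod s).val = 1 := ZMod.val_one s
          rw [ZMod.val_add_of_lt (by rw [h1]; omega), h1]
        rw [hv]
        exact hstep i.val (by have := ZMod.val_lt i; omega)
      · have hival : i.val = s - 1 := by have := ZMod.val_lt i; omega
        have hieq : i = ((s - 1 : ℕ) : ZMod s) := by
          rw [← ZMod.natCast_zmod_val i, hival]
        have hv : (i + 1 : ZMod s) = 0 := by
          rw [hieq]
          have : ((s - 1 : ℕ) : ZMod s) + 1 = ((s - 1 + 1 : ℕ) : ZMod s) := by push_cast; ring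
          rw [this, show s - 1 + 1 = s by omega]
          exact ZMod.natCast_self s
        rw [hv]
        have hz : (0 : ZMod s).val = 0 := ZMod.val_zero
        rw [hz]
        have hs' : i.val + 1 = s := by have := ZMod.val_lt i; omega
        have hstep2 : Rel E (f i.val) (f (i.val + 1)) := hstep i.val (by omega)
        rw [hs', hfs] at hstep2
        rw [hf0]
        exact hstep2
    exact hstep'

end CRmain

namespace CRfinal
open CRdig CRmain
open scoped Classical

theorem main (t : ℕ) (ht : 2 ≤ t) (ε : ℝ) (hε : 0 < ε) :
    ∀ (V : Type) [Fintype V] [DecidableEq V] (n : ℕ),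
      n = Fintype.card V → 100*(t+2)^2 ≤ n →
      ∀ E : Set (Finset V), (∀ e ∈ E, e.card = 3) →
      (∀ x y : V, x ≠ y →
        (Real.sqrt 2 / Real.sqrt t + ε) * n ≤ ({z : V | ({x, y, z} : Finset V) ∈ E}.ncard : ℝ)) →
      ∃ s : ℕ, 2 ≤ s ∧ s ≤ t ∧
        ∃ u v : ZMod s → V,
          (∀ i, u i ≠ v i) ∧
          (∀ i j : ZMod s, i ≠ j → ({u i, v i} : Finset V) ≠ ({u j, v j} : Finset V)) ∧
          (∀ i : ZMod s, ({u i, v i, u (i + 1)} : Finset V) ∈ E ∧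
            ({u i, v i, v (i + 1)} : Finset V) ∈ E) := by
  intro V _ _ n hn hn0 E hE3 hco
  by_contra hcon
  -- basic facts about n and t
  have htn : t ≤ n := by nlinarith [sq_nonneg (t+2)]
  have hn2 : 2 ≤ n := by nlinarith [sq_nonneg (t+2)]
  have ht0 : 0 < t := by omega
  -- the pair type is nonempty
  obtain ⟨a, b, hab⟩ := Fintype.exists_pair_of_one_lt_card (by omega : 1 < Fintype.card V)
  haveI hne : Nonempty (PairT V) := ⟨⟨(a, b), hab⟩⟩
  set R := CRmain.Rel E with hR
  -- no short closed walks (else we get a ring)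
  have hban : ∀ (p : PairT V) (k : ℕ), 1 ≤ k → k ≤ t → ¬ reachIn R k p p := by
    intro p k hk1 hkt hreach
    exact hcon (extract E hE3 t k hk1 hkt p hreach)
  -- co-degree: each pair has many out-neighbours
  have hcodeg : ∀ p : PairT V,
      2*(n:ℝ)^2/t - n + 1 ≤ ((ball R 1 p).card : ℝ) := by
    intro p
    obtain ⟨⟨x, y⟩, hxy⟩ := p
    set Np : Finset V := Finset.univ.filter (fun z => ({x, y, z} : Finset V) ∈ E) with hNp
    set m : ℕ := Np.card with hm
    -- m is large
    have hncard : ({z : V | ({x, y, z} : Finset V) ∈ E}.ncard : ℝ) = (m : ℝ) := by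
      rw [hm, hNp]
      norm_cast
      rw [Set.ncard_eq_toFinset_card']
      congr 1
      simp [Set.toFinset_setOf]
    have hmlow : Real.sqrt 2 / Real.sqrt t * n ≤ (m:ℝ) := by
      have h1 := hco x y hxy
      rw [hncard] at h1
      have h2 : 0 ≤ ε * n := by positivity
      nlinarith
    have hsq : 2*(n:ℝ)^2/t ≤ (m:ℝ)^2 := by
      have hr0 : 0 ≤ Real.sqrt 2 / Real.sqrt t := by positivity
      have hn0' : (0:ℝ) ≤ n := by positivity
      have h3 : (Real.sqrt 2 / Real.sqrt t * n)^2 ≤ (m:ℝ)^2 := by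
        apply sq_le_sq' _ hmlow
        nlinarith [mul_nonneg hr0 hn0']
      have h4 : (Real.sqrt 2 / Real.sqrt t * n)^2 = 2/(t:ℝ) * n^2 := by
        rw [mul_pow, div_pow, Real.sq_sqrt (by norm_num : (2:ℝ) ≥ 0)]
        rw [Real.sq_sqrt (by positivity : ((t:ℕ):ℝ) ≥ 0)]
      rw [h4] at h3
      calc 2*(n:ℝ)^2/t = 2/(t:ℝ)*n^2 := by ring
      _ ≤ (m:ℝ)^2 := h3
    have hmn : m ≤ n := by
      rw [hn, hm]
      calc Np.card ≤ Finset.univ.card := Finset.card_le_univ Np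
      _ = Fintype.card V := Finset.card_univ
    have hm1 : 1 ≤ m := by
      by_contra hc
      have : m = 0 := by omega
      rw [this] at hmlow
      have hs2 : 0 < Real.sqrt 2 := Real.sqrt_pos.2 (by norm_num)
      have hst : 0 < Real.sqrt t := Real.sqrt_pos.2 (by positivity)
      have : 0 < Real.sqrt 2 / Real.sqrt t * n := by
        apply mul_pos (div_pos hs2 hst)
        have : (0:ℕ) < n := by omega
        exact_mod_cast this
      simp at hmlow
      linarith
    -- x not a co-neighbour
    have hxnot : x ∉ Np := by
      rw [hNp]
      simp only [Finset.mem_filter, Finset.mem_univ, true_and]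
      intro hmem
      have hcard := hE3 _ hmem
      have heq : ({x, y, x} : Finset V) = {x, y} := by
        ext z
        simp only [Finset.mem_insert, Finset.mem_singleton]
        tauto
      rw [heq] at hcard
      have : ({x, y} : Finset V).card ≤ 2 := by
        apply le_trans (Finset.card_insert_le _ _)
        simp
      omega
    -- build many out-neighbours
    set p : PairT V := ⟨(x, y), hxy⟩ with hp
    have hinj : ∀ q : {q // q ∈ Np.offDiag},
        ((⟨q.val, (Finset.mem_offDiag.1 q.property).2.2⟩ : PairT V) ∈ ball R 1 p) := by
      intro ⟨⟨z, w⟩, hq⟩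
      obtain ⟨hz, hw, hzw⟩ := Finset.mem_offDiag.1 hq
      rw [hNp] at hz hw
      simp only [Finset.mem_filter] at hz hw
      apply (mem_ball R).2
      refine ⟨1, le_rfl, ?_⟩
      exact ⟨_, ⟨hz.2, hw.2⟩, rfl⟩
    set I : Finset (PairT V) :=
      Np.offDiag.attach.image (fun q => @id (PairT V) ⟨q.val, (Finset.mem_offDiag.1 q.property).2.2⟩) with hI
    have hIcard : I.card = m*m - m := by
      rw [hI]
      rw [Finset.card_image_of_injective _ (by
        intro q q' hqq'
        apply Subtype.ext
        exact Subtype.mk_eq_mk.1 hqq')]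
      rw [Finset.card_attach]
      rw [Finset.offDiag_card]
    have hIball : I ⊆ ball R 1 p := by
      intro q hq
      rw [hI, Finset.mem_image] at hq
      obtain ⟨q', _, rfl⟩ := hq
      exact hinj q'
    have hpI : p ∉ I := by
      rw [hI, Finset.mem_image]
      rintro ⟨⟨⟨z, w⟩, hq⟩, -, heq⟩
      obtain ⟨hz, -, -⟩ := Finset.mem_offDiag.1 hq
      have : z = x := by
        have := congrArg (fun r : PairT V => r.val.1) heq
        exact this
      rw [this] at hz
      exact hxnot hz
    have hcard : m*m - m + 1 ≤ (ball R 1 p).card := by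
      have h1 : insert p I ⊆ ball R 1 p := by
        intro q hq
        rcases Finset.mem_insert.1 hq with h | h
        · rw [h]; exact self_mem_ball R
        · exact hIball h
      calc m*m - m + 1 = I.card + 1 := by rw [hIcard]
      _ = (insert p I).card := (Finset.card_insert_of_notMem hpI).symm
      _ ≤ (ball R 1 p).card := Finset.card_le_card h1
    -- conclude in ℝ
    have hcastsub : ((m*m - m : ℕ) : ℝ) = (m:ℝ)^2 - m := by
      have : m ≤ m*m := Nat.le_mul_of_pos_left m (by omega)
      push_cast [Nat.cast_sub this]
      ring
    have hfin : ((m*m - m + 1 : ℕ):ℝ) ≤ ((ball R 1 p).card : ℝ) := by exact_mod_cast hcard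
    rw [show ((m*m - m + 1 : ℕ):ℝ) = ((m*m - m : ℕ):ℝ) + 1 by push_cast; ring, hcastsub] at hfin
    have hmr : (m:ℝ) ≤ (n:ℝ) := by exact_mod_cast hmn
    calc 2*(n:ℝ)^2/t - n + 1 ≤ (m:ℝ)^2 - m + 1 := by linarith
    _ ≤ ((ball R 1 p).card : ℝ) := hfin
  -- set degree bound
  set Dd : ℕ := Gm R 1 with hDd
  have hdeg : ∀ p : PairT V, Dd ≤ (ball R 1 p).card := fun p => Gm_le R 1 p
  have hDlow : 2*(n:ℝ)^2/t - n + 1 ≤ (Dd:ℝ) := by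
    obtain ⟨p, hp⟩ := exists_Gm R 1
    rw [hDd, ← hp]
    exact hcodeg p
  -- auxiliary: 2 n^2/t ≥ 2n
  have h2t : (0:ℝ) < t := by exact_mod_cast ht0
  have htnR : (t:ℝ) ≤ n := by exact_mod_cast htn
  have hnR0 : (0:ℝ) ≤ n := by positivity
  have hnt : 2*(n:ℝ) ≤ 2*(n:ℝ)^2/t := by
    rw [le_div_iff₀ h2t]
    nlinarith
  have hn0R : 100*((t:ℝ)+2)^2 ≤ n := by exact_mod_cast hn0
  have ht2R : (2:ℝ) ≤ t := by exact_mod_cast ht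
  -- the Dd is big enough for the digraph lemma
  have hDnat : 12*(t+1) + 10 ≤ Dd := by
    have h1 : ((12*(t+1) + 10 : ℕ):ℝ) ≤ (Dd:ℝ) := by
      push_cast
      have h2 : 12*((t:ℝ)+1) + 10 ≤ (n:ℝ) + 1 := by nlinarith
      have h3 : (n:ℝ) + 1 ≤ 2*(n:ℝ)^2/t - n + 1 := by linarith
      linarith
    exact_mod_cast h1
  -- apply the digraph lemma
  have hdig := dig R t Dd ht hDnat hdeg hban
  clear_value R Dd
  clear hdeg hban hcodeg hDnat hcon hco
  -- card of PairT V is at most n^2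
  have hcardP : Fintype.card (PairT V) ≤ n*n := by
    have h1 : Fintype.card (PairT V) ≤ Fintype.card (V × V) :=
      Fintype.card_le_of_injective _ Subtype.val_injective
    have h2 : Fintype.card (V × V) = n*n := by
      rw [Fintype.card_prod, ← hn]
    omega
  -- final contradiction, in the reals
  have hdigR : ((t/2 + 1 : ℕ):ℝ) * (Dd:ℝ) ≤ (n:ℝ)*n + 2*((t:ℝ)+1) + 1 := by
    have h1 : (t/2 + 1) * Dd ≤ n*n + 2*(t+1) + 1 := le_trans hdig (by omega)
    exact_mod_cast h1
  have hhalf : ((t:ℝ)+1)/2 ≤ ((t/2 + 1 : ℕ):ℝ) := by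
    have h1 : t + 1 ≤ 2*(t/2 + 1) := by omega
    have h2 : ((t+1 : ℕ):ℝ) ≤ ((2*(t/2 + 1) : ℕ):ℝ) := by exact_mod_cast h1
    push_cast at h2 ⊢
    linarith
  set X : ℝ := 2*(n:ℝ)^2/t - n + 1 with hX
  have hX0 : (0:ℝ) ≤ X := by
    rw [hX]
    nlinarith
  have hXD : X ≤ (Dd:ℝ) := hDlow
  have hJ0 : (0:ℝ) ≤ ((t/2 + 1 : ℕ):ℝ) := by positivity
  have hchain : ((t:ℝ)+1)/2 * X ≤ (n:ℝ)*n + 2*((t:ℝ)+1) + 1 := by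
    calc ((t:ℝ)+1)/2 * X ≤ ((t/2 + 1 : ℕ):ℝ) * (Dd:ℝ) := by
          apply mul_le_mul hhalf hXD hX0 hJ0
    _ ≤ (n:ℝ)*n + 2*((t:ℝ)+1) + 1 := hdigR
  -- multiply out by 2t
  have htX : (t:ℝ) * X = 2*(n:ℝ)^2 - t*n + t := by
    rw [hX]
    field_simp
  have hfinal : 2*(n:ℝ)^2 ≤ (t:ℝ)^2*n + (t:ℝ)*n + 5*(t:ℝ)^2 + 7*(t:ℝ) := by
    have h1 : 2*(t:ℝ) * (((t:ℝ)+1)/2 * X) ≤ 2*t*((n:ℝ)*n + 2*((t:ℝ)+1) + 1) := by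
      apply mul_le_mul_of_nonneg_left hchain (by positivity)
    have h2 : 2*(t:ℝ) * (((t:ℝ)+1)/2 * X) = ((t:ℝ)+1) * ((t:ℝ)*X) := by ring
    rw [h2, htX] at h1
    have h3 : ((t:ℝ)+1) * (2*(n:ℝ)^2 - (t:ℝ)*n + t)
        = 2*(t:ℝ)*(n:ℝ)^2 + 2*(n:ℝ)^2 - (t:ℝ)^2*n - (t:ℝ)*n + (t:ℝ)^2 + t := by ring
    have h4 : 2*(t:ℝ)*((n:ℝ)*n + 2*((t:ℝ)+1) + 1) = 2*(t:ℝ)*(n:ℝ)^2 + 4*(t:ℝ)^2 + 6*(t:ℝ) := by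
      ring
    rw [h3, h4] at h1
    linarith only [h1, ht2R, sq_nonneg ((t:ℝ))]
  -- contradiction with n ≥ 100 (t+2)^2
  have hnpos : (0:ℝ) < n := by
    have : (0:ℕ) < n := by omega
    exact_mod_cast this
  have k1 : 100*((t:ℝ)+2)^2 * n ≤ n * n := mul_le_mul_of_nonneg_right hn0R hnR0
  have k3 : 5*(t:ℝ)^2 + 7*(t:ℝ) ≤ n := by nlinarith only [hn0R, ht2R]
  have k4 : (t:ℝ)^2 + (t:ℝ) + 1 ≤ 100*((t:ℝ)+2)^2 := by nlinarith only [ht2R]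
  have k5 : ((t:ℝ)^2 + (t:ℝ) + 1) * n ≤ 100*((t:ℝ)+2)^2 * n := mul_le_mul_of_nonneg_right k4 hnR0
  nlinarith only [hfinal, k1, k3, k5, hnpos]

end CRfinal

end

/-- If every pair of distinct vertices of a 3-graph `G` on `n` vertices has co-degree at
least `(√2/√t + ε)·n`, with `n` sufficiently large, then `G` contains a degenerate ring:
pairwise distinct pairs `{u_i, v_i}` (for `i` mod `s`, some `2 ≤ s ≤ t`) such that
`{u_i, v_i, u_{i+1}}` and `{u_i, v_i, v_{i+1}}` are edges for all `i`. -/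
theorem codegree_ring (t : ℕ) (ht : 2 ≤ t) (ε : ℝ) (hε : 0 < ε) :
    ∃ n0 : ℕ, ∀ (V : Type) [Fintype V] [DecidableEq V] (n : ℕ),
      n = Fintype.card V → n0 ≤ n →
      ∀ E : Set (Finset V), (∀ e ∈ E, e.card = 3) →
      (∀ x y : V, x ≠ y →
        (Real.sqrt 2 / Real.sqrt t + ε) * n ≤ ({z : V | ({x, y, z} : Finset V) ∈ E}.ncard : ℝ)) →
      ∃ s : ℕ, 2 ≤ s ∧ s ≤ t ∧
        ∃ u v : ZMod s → V,
          (∀ i, u i ≠ v i) ∧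
          (∀ i j : ZMod s, i ≠ j → ({u i, v i} : Finset V) ≠ ({u j, v j} : Finset V)) ∧
          (∀ i : ZMod s, ({u i, v i, u (i + 1)} : Finset V) ∈ E ∧
            ({u i, v i, v (i + 1)} : Finset V) ∈ E) := by
  refine ⟨100*(t+2)^2, ?_⟩
  intro V _ _ n hn hn0 E hE3 hco
  exact CRfinal.main t ht ε hε V n hn hn0 E hE3 hco
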